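/- Semigroup/resolvent-type identity: let λ, λ' be distinct complex numbers with e^{-λ} ≠ 1 and e^{-λ'} ≠ 1, and t, t' ∈ [0,1). Then ∫₀¹ (e^{-λ[s-t]}/(1-e^{-λ})) · (e^{-λ'[t'-s]}/(1-e^{-λ'})) ds = (1/(λ-λ')) · [ e^{-λ'[t'-t]}/(1-e^{-λ'}) - e^{-λ[t'-t]}/(1-e^{-λ}) ], where [s] = s + 1{s<0} denotes the residue mod 1. -/

import Mathlib

set_option maxHeartbeats 1000000

open MeasureTheory

/-- The residue mod 1 of a real number `s ∈ (-1,1)`: `[s] = s + 1_{s<0}`. -/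
noncomputable def resMod1 (s : ℝ) : ℝ := s + (if s < 0 then 1 else 0)

lemma aux_ae_ne (t : ℝ) : ∀ᵐ s : ℝ, s ≠ t := by
  rw [MeasureTheory.ae_iff]
  simpa using Real.volume_singleton (a := t)

lemma aux_int (C c : ℂ) (hc : c ≠ 0) (x y : ℝ) (f : ℝ → ℂ)
    (hf : ∀ᵐ s : ℝ, s ∈ Set.uIoc x y → f s = C * Complex.exp (c * (s : ℂ))) :
    IntervalIntegrable f MeasureTheory.volume x y ∧
      ∫ s in x..y, f s
        = C * ((Complex.exp (c * (y : ℂ)) - Complex.exp (c * (x : ℂ))) / c) := by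
  have hg : IntervalIntegrable (fun s : ℝ => C * Complex.exp (c * (s : ℂ)))
      MeasureTheory.volume x y := by
    apply Continuous.intervalIntegrable
    fun_prop
  constructor
  · rw [intervalIntegrable_iff] at hg ⊢
    exact hg.congr ((ae_restrict_iff' measurableSet_uIoc).2
      (hf.mono fun s h hs => (h hs).symm))
  · rw [intervalIntegral.integral_congr_ae hf, intervalIntegral.integral_const_mul,
      integral_exp_mul_complex hc]

lemma core1 (U V P P' Q Q' : ℂ) (hP : P ≠ 0) (hP' : P' ≠ 0) (hQ' : Q' ≠ 0) (hV : V ≠ 0) :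
    U * P / Q' * (Q / P - 1) + (P / Q' * (Q' / P' - Q / P) + P / Q' * V * (U / V - Q' / P'))
    = (1 - V) * (P / P') - (1 - U) * (Q / Q') := by
  field_simp
  ring

lemma core2 (U V P P' Q Q' : ℂ) (hP : P ≠ 0) (hP' : P' ≠ 0) (hQ' : Q' ≠ 0) (hV : V ≠ 0) :
    U * P / Q' * (Q' / P' - 1) + (U * P * V / Q' * (Q / P - Q' / P') + P * V / Q' * (U / V - Q / P))
    = (1 - V) * (P * U / P') - (1 - U) * (Q * V / Q') := by
  field_simp
  ring

lemma rhs_comb (w w' U V X Y : ℂ) (hU : 1 - U ≠ 0) (hV : 1 - V ≠ 0) (hw : w ≠ 0)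
    (hw' : w' = -w) :
    1 / w' * (X / (1 - V) - Y / (1 - U))
      = ((1 - V) * Y - (1 - U) * X) / ((1 - U) * (1 - V)) / w := by
  subst hw'
  field_simp
  ring

/-- Resolvent-type identity:
`∫₀¹ (e^{-λ[s-t]}/(1-e^{-λ}))(e^{-λ'[t'-s]}/(1-e^{-λ'})) ds
  = (1/(λ-λ'))(e^{-λ'[t'-t]}/(1-e^{-λ'}) - e^{-λ[t'-t]}/(1-e^{-λ}))`. -/
theorem kernel_resolvent_identity (lam lam' : ℂ) (hne : lam ≠ lam')
    (h1 : Complex.exp (-lam) ≠ 1) (h2 : Complex.exp (-lam') ≠ 1)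
    (t t' : ℝ) (ht : t ∈ Set.Ico (0 : ℝ) 1) (ht' : t' ∈ Set.Ico (0 : ℝ) 1) :
    ∫ s in (0 : ℝ)..1,
        (Complex.exp (-lam * ((resMod1 (s - t) : ℝ) : ℂ)) / (1 - Complex.exp (-lam))) *
        (Complex.exp (-lam' * ((resMod1 (t' - s) : ℝ) : ℂ)) / (1 - Complex.exp (-lam')))
    = (1 / (lam - lam')) *
        (Complex.exp (-lam' * ((resMod1 (t' - t) : ℝ) : ℂ)) / (1 - Complex.exp (-lam'))
          - Complex.exp (-lam * ((resMod1 (t' - t) : ℝ) : ℂ)) / (1 - Complex.exp (-lam))) := by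
  obtain ⟨ht0, ht1⟩ := ht
  obtain ⟨ht'0, ht'1⟩ := ht'
  have hE : (1 : ℂ) - Complex.exp (-lam) ≠ 0 := sub_ne_zero.2 (Ne.symm h1)
  have hE' : (1 : ℂ) - Complex.exp (-lam') ≠ 0 := sub_ne_zero.2 (Ne.symm h2)
  have hc : lam' - lam ≠ 0 := sub_ne_zero.2 (Ne.symm hne)
  have hc' : lam - lam' ≠ 0 := sub_ne_zero.2 hne
  set f : ℝ → ℂ := fun s =>
    (Complex.exp (-lam * ((resMod1 (s - t) : ℝ) : ℂ)) / (1 - Complex.exp (-lam))) *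
    (Complex.exp (-lam' * ((resMod1 (t' - s) : ℝ) : ℂ)) / (1 - Complex.exp (-lam')))
    with hfdef
  have key : ∀ (s : ℝ) (X Y : ℝ), resMod1 (s - t) = X → resMod1 (t' - s) = Y →
      ∀ K : ℂ, -lam * (X : ℂ) + -lam' * (Y : ℂ) = K + (lam' - lam) * (s : ℂ) →
      f s = (Complex.exp K / ((1 - Complex.exp (-lam)) * (1 - Complex.exp (-lam'))))
              * Complex.exp ((lam' - lam) * (s : ℂ)) := by
    intro s X Y hX hY K hK
    rw [hfdef]
    simp only [hX, hY]
    rw [div_mul_div_comm, ← Complex.exp_add, div_mul_eq_mul_div, ← Complex.exp_add, hK]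
  rcases le_or_gt t t' with h | h
  · -- t ≤ t'
    have hf1 : ∀ᵐ s : ℝ, s ∈ Set.uIoc 0 t → f s =
        (Complex.exp (-lam + lam * (t : ℂ) - lam' * (t' : ℂ)) /
          ((1 - Complex.exp (-lam)) * (1 - Complex.exp (-lam'))))
        * Complex.exp ((lam' - lam) * (s : ℂ)) := by
      filter_upwards [aux_ae_ne t] with s hst hs
      rw [Set.uIoc_of_le ht0] at hs
      obtain ⟨h0s, hs1⟩ := hs
      have hslt : s < t := lt_of_le_of_ne hs1 hst
      refine key s (s - t + 1) (t' - s) ?_ ?_ _ ?_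
      · simp [resMod1, sub_neg.2 hslt]
      · simp [resMod1, not_lt.2 (sub_nonneg.2 (hslt.le.trans h))]
      · push_cast; ring
    have hf2 : ∀ᵐ s : ℝ, s ∈ Set.uIoc t t' → f s =
        (Complex.exp (lam * (t : ℂ) - lam' * (t' : ℂ)) /
          ((1 - Complex.exp (-lam)) * (1 - Complex.exp (-lam'))))
        * Complex.exp ((lam' - lam) * (s : ℂ)) := by
      refine Filter.Eventually.of_forall fun s hs => ?_
      rw [Set.uIoc_of_le h] at hs
      obtain ⟨hts, hst'⟩ := hs
      refine key s (s - t) (t' - s) ?_ ?_ _ ?_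
      · simp [resMod1, not_lt.2 (sub_nonneg.2 hts.le)]
      · simp [resMod1, not_lt.2 (sub_nonneg.2 hst')]
      · push_cast; ring
    have hf3 : ∀ᵐ s : ℝ, s ∈ Set.uIoc t' 1 → f s =
        (Complex.exp (lam * (t : ℂ) - lam' * (t' : ℂ) - lam') /
          ((1 - Complex.exp (-lam)) * (1 - Complex.exp (-lam'))))
        * Complex.exp ((lam' - lam) * (s : ℂ)) := by
      refine Filter.Eventually.of_forall fun s hs => ?_
      rw [Set.uIoc_of_le ht'1.le] at hs
      obtain ⟨hts, hs1⟩ := hs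
      refine key s (s - t) (t' - s + 1) ?_ ?_ _ ?_
      · simp [resMod1, not_lt.2 (sub_nonneg.2 ((h.trans_lt hts).le))]
      · simp [resMod1, sub_neg.2 hts]
      · push_cast; ring
    obtain ⟨i1, v1⟩ := aux_int _ _ hc 0 t f hf1
    obtain ⟨i2, v2⟩ := aux_int _ _ hc t t' f hf2
    obtain ⟨i3, v3⟩ := aux_int _ _ hc t' 1 f hf3
    have hsplit : ∫ s in (0:ℝ)..1, f s =
        (∫ s in (0:ℝ)..t, f s) + ((∫ s in t..t', f s) + ∫ s in t'..(1:ℝ), f s) := by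
      rw [intervalIntegral.integral_add_adjacent_intervals i2 i3,
        intervalIntegral.integral_add_adjacent_intervals i1 (i2.trans i3)]
    rw [show (∫ s in (0:ℝ)..1,
        (Complex.exp (-lam * ((resMod1 (s - t) : ℝ) : ℂ)) / (1 - Complex.exp (-lam))) *
        (Complex.exp (-lam' * ((resMod1 (t' - s) : ℝ) : ℂ)) / (1 - Complex.exp (-lam'))))
        = ∫ s in (0:ℝ)..1, f s from rfl]
    rw [hsplit, v1, v2, v3,
      show resMod1 (t' - t) = t' - t by simp [resMod1, not_lt.2 (sub_nonneg.2 h)]]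
    simp only [Complex.ofReal_zero, Complex.ofReal_one, mul_zero, mul_one, Complex.exp_zero]
    rw [show ((t' - t : ℝ) : ℂ) = (t' : ℂ) - (t : ℂ) by push_cast; ring]
    rw [show Complex.exp (-lam + lam * (t:ℂ) - lam' * (t':ℂ))
        = Complex.exp (-lam) * Complex.exp (lam * (t:ℂ)) / Complex.exp (lam' * (t':ℂ)) by
        rw [← Complex.exp_add, ← Complex.exp_sub],
      show Complex.exp (lam * (t:ℂ) - lam' * (t':ℂ))
        = Complex.exp (lam * (t:ℂ)) / Complex.exp (lam' * (t':ℂ)) by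
        rw [← Complex.exp_sub],
      show Complex.exp (lam * (t:ℂ) - lam' * (t':ℂ) - lam')
        = Complex.exp (lam * (t:ℂ)) / Complex.exp (lam' * (t':ℂ)) * Complex.exp (-lam') by
        rw [← Complex.exp_sub, ← Complex.exp_add]
        exact congrArg Complex.exp (by ring),
      show Complex.exp ((lam' - lam) * (t:ℂ))
        = Complex.exp (lam' * (t:ℂ)) / Complex.exp (lam * (t:ℂ)) by
        rw [← Complex.exp_sub]; exact congrArg Complex.exp (by ring),
      show Complex.exp ((lam' - lam) * (t':ℂ))
        = Complex.exp (lam' * (t':ℂ)) / Complex.exp (lam * (t':ℂ)) by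
        rw [← Complex.exp_sub]; exact congrArg Complex.exp (by ring),
      show Complex.exp (lam' - lam)
        = Complex.exp (-lam) / Complex.exp (-lam') by
        rw [← Complex.exp_sub]; exact congrArg Complex.exp (by ring),
      show Complex.exp (-lam' * ((t':ℂ) - (t:ℂ)))
        = Complex.exp (lam' * (t:ℂ)) / Complex.exp (lam' * (t':ℂ)) by
        rw [← Complex.exp_sub]; exact congrArg Complex.exp (by ring),
      show Complex.exp (-lam * ((t':ℂ) - (t:ℂ)))
        = Complex.exp (lam * (t:ℂ)) / Complex.exp (lam * (t':ℂ)) by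
        rw [← Complex.exp_sub]; exact congrArg Complex.exp (by ring)]
    rw [rhs_comb (lam' - lam) (lam - lam') (Complex.exp (-lam)) (Complex.exp (-lam'))
      (Complex.exp (lam' * (t:ℂ)) / Complex.exp (lam' * (t':ℂ)))
      (Complex.exp (lam * (t:ℂ)) / Complex.exp (lam * (t':ℂ))) hE hE' hc (by ring)]
    have hcore := core1 (Complex.exp (-lam)) (Complex.exp (-lam'))
      (Complex.exp (lam * (t:ℂ))) (Complex.exp (lam * (t':ℂ)))
      (Complex.exp (lam' * (t:ℂ))) (Complex.exp (lam' * (t':ℂ)))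
      (Complex.exp_ne_zero _) (Complex.exp_ne_zero _) (Complex.exp_ne_zero _)
      (Complex.exp_ne_zero _)
    linear_combination (1 / (lam' - lam)) *
      (1 / ((1 - Complex.exp (-lam)) * (1 - Complex.exp (-lam')))) * hcore
  · -- t' < t
    have hf1 : ∀ᵐ s : ℝ, s ∈ Set.uIoc 0 t' → f s =
        (Complex.exp (-lam + lam * (t : ℂ) - lam' * (t' : ℂ)) /
          ((1 - Complex.exp (-lam)) * (1 - Complex.exp (-lam'))))
        * Complex.exp ((lam' - lam) * (s : ℂ)) := by
      refine Filter.Eventually.of_forall fun s hs => ?_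
      rw [Set.uIoc_of_le ht'0] at hs
      obtain ⟨h0s, hs1⟩ := hs
      refine key s (s - t + 1) (t' - s) ?_ ?_ _ ?_
      · simp [resMod1, sub_neg.2 (hs1.trans_lt h)]
      · simp [resMod1, not_lt.2 (sub_nonneg.2 hs1)]
      · push_cast; ring
    have hf2 : ∀ᵐ s : ℝ, s ∈ Set.uIoc t' t → f s =
        (Complex.exp (-lam + lam * (t : ℂ) - lam' - lam' * (t' : ℂ)) /
          ((1 - Complex.exp (-lam)) * (1 - Complex.exp (-lam'))))
        * Complex.exp ((lam' - lam) * (s : ℂ)) := by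
      filter_upwards [aux_ae_ne t] with s hst hs
      rw [Set.uIoc_of_le h.le] at hs
      obtain ⟨ht's, hst1⟩ := hs
      have hslt : s < t := lt_of_le_of_ne hst1 hst
      refine key s (s - t + 1) (t' - s + 1) ?_ ?_ _ ?_
      · simp [resMod1, sub_neg.2 hslt]
      · simp [resMod1, sub_neg.2 ht's]
      · push_cast; ring
    have hf3 : ∀ᵐ s : ℝ, s ∈ Set.uIoc t 1 → f s =
        (Complex.exp (lam * (t : ℂ) - lam' - lam' * (t' : ℂ)) /
          ((1 - Complex.exp (-lam)) * (1 - Complex.exp (-lam'))))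
        * Complex.exp ((lam' - lam) * (s : ℂ)) := by
      refine Filter.Eventually.of_forall fun s hs => ?_
      rw [Set.uIoc_of_le ht1.le] at hs
      obtain ⟨hts, hs1⟩ := hs
      refine key s (s - t) (t' - s + 1) ?_ ?_ _ ?_
      · simp [resMod1, not_lt.2 (sub_nonneg.2 hts.le)]
      · simp [resMod1, sub_neg.2 (h.trans hts)]
      · push_cast; ring
    obtain ⟨i1, v1⟩ := aux_int _ _ hc 0 t' f hf1
    obtain ⟨i2, v2⟩ := aux_int _ _ hc t' t f hf2
    obtain ⟨i3, v3⟩ := aux_int _ _ hc t 1 f hf3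
    have hsplit : ∫ s in (0:ℝ)..1, f s =
        (∫ s in (0:ℝ)..t', f s) + ((∫ s in t'..t, f s) + ∫ s in t..(1:ℝ), f s) := by
      rw [intervalIntegral.integral_add_adjacent_intervals i2 i3,
        intervalIntegral.integral_add_adjacent_intervals i1 (i2.trans i3)]
    rw [show (∫ s in (0:ℝ)..1,
        (Complex.exp (-lam * ((resMod1 (s - t) : ℝ) : ℂ)) / (1 - Complex.exp (-lam))) *
        (Complex.exp (-lam' * ((resMod1 (t' - s) : ℝ) : ℂ)) / (1 - Complex.exp (-lam'))))
        = ∫ s in (0:ℝ)..1, f s from rfl]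
    rw [hsplit, v1, v2, v3,
      show resMod1 (t' - t) = t' - t + 1 by simp [resMod1, sub_neg.2 h]]
    simp only [Complex.ofReal_zero, Complex.ofReal_one, mul_zero, mul_one, Complex.exp_zero]
    rw [show ((t' - t + 1 : ℝ) : ℂ) = (t' : ℂ) - (t : ℂ) + 1 by push_cast; ring]
    rw [show Complex.exp (-lam + lam * (t:ℂ) - lam' * (t':ℂ))
        = Complex.exp (-lam) * Complex.exp (lam * (t:ℂ)) / Complex.exp (lam' * (t':ℂ)) by
        rw [← Complex.exp_add, ← Complex.exp_sub],
      show Complex.exp (-lam + lam * (t:ℂ) - lam' - lam' * (t':ℂ))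
        = Complex.exp (-lam) * Complex.exp (lam * (t:ℂ)) * Complex.exp (-lam')
            / Complex.exp (lam' * (t':ℂ)) by
        rw [← Complex.exp_add, ← Complex.exp_add, ← Complex.exp_sub]; exact congrArg Complex.exp (by ring),
      show Complex.exp (lam * (t:ℂ) - lam' - lam' * (t':ℂ))
        = Complex.exp (lam * (t:ℂ)) * Complex.exp (-lam') / Complex.exp (lam' * (t':ℂ)) by
        rw [← Complex.exp_add, ← Complex.exp_sub]; exact congrArg Complex.exp (by ring),
      show Complex.exp ((lam' - lam) * (t:ℂ))
        = Complex.exp (lam' * (t:ℂ)) / Complex.exp (lam * (t:ℂ)) by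
        rw [← Complex.exp_sub]; exact congrArg Complex.exp (by ring),
      show Complex.exp ((lam' - lam) * (t':ℂ))
        = Complex.exp (lam' * (t':ℂ)) / Complex.exp (lam * (t':ℂ)) by
        rw [← Complex.exp_sub]; exact congrArg Complex.exp (by ring),
      show Complex.exp (lam' - lam)
        = Complex.exp (-lam) / Complex.exp (-lam') by
        rw [← Complex.exp_sub]; exact congrArg Complex.exp (by ring),
      show Complex.exp (-lam' * ((t':ℂ) - (t:ℂ) + 1))
        = Complex.exp (lam' * (t:ℂ)) * Complex.exp (-lam') / Complex.exp (lam' * (t':ℂ)) by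
        rw [← Complex.exp_add, ← Complex.exp_sub]; exact congrArg Complex.exp (by ring),
      show Complex.exp (-lam * ((t':ℂ) - (t:ℂ) + 1))
        = Complex.exp (lam * (t:ℂ)) * Complex.exp (-lam) / Complex.exp (lam * (t':ℂ)) by
        rw [← Complex.exp_add, ← Complex.exp_sub]; exact congrArg Complex.exp (by ring)]
    rw [rhs_comb (lam' - lam) (lam - lam') (Complex.exp (-lam)) (Complex.exp (-lam'))
      (Complex.exp (lam' * (t:ℂ)) * Complex.exp (-lam') / Complex.exp (lam' * (t':ℂ)))
      (Complex.exp (lam * (t:ℂ)) * Complex.exp (-lam) / Complex.exp (lam * (t':ℂ))) hE hE' hc (by ring)]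
    have hcore := core2 (Complex.exp (-lam)) (Complex.exp (-lam'))
      (Complex.exp (lam * (t:ℂ))) (Complex.exp (lam * (t':ℂ)))
      (Complex.exp (lam' * (t:ℂ))) (Complex.exp (lam' * (t':ℂ)))
      (Complex.exp_ne_zero _) (Complex.exp_ne_zero _) (Complex.exp_ne_zero _)
      (Complex.exp_ne_zero _)
    linear_combination (1 / (lam' - lam)) *
      (1 / ((1 - Complex.exp (-lam)) * (1 - Complex.exp (-lam')))) * hcore
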